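/- Let x, y be skew primitive semi-invariants in a Hopf algebra with p12 = χ^x(g_y), p21 = χ^y(g_x), p22 = χ^y(g_y), and suppose p12·p21 = p22^{1-n} for some n ≥ 1. Then the iterated skew commutator W = [⋯[[x,y]_{p12}, y]_{p12 p22}, ⋯, y]_{p12 p22^{n-1}} is a (g_x g_y^n)-primitive element. -/

import Mathlib

open Coalgebra TensorProduct

/-- The iterated skew commutator `[⋯[[x,y]_{p₁₂}, y]_{p₁₂p₂₂}, ⋯, y]_{p₁₂p₂₂^{n-1}}`. -/
def iterSkewComm {k H : Type*} [Field k] [Ring H] [Algebra k H]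
    (p12 p22 : k) (x y : H) : ℕ → H
  | 0 => x
  | n + 1 => iterSkewComm p12 p22 x y n * y -
      (p12 * p22 ^ n) • (y * iterSkewComm p12 p22 x y n)

section scalars
variable {k : Type*} [CommRing k]

/-- Gaussian binomial coefficient via the q-Pascal recursion. -/
def qb (q : k) : ℕ → ℕ → k
  | 0, 0 => 1
  | 0, _ + 1 => 0
  | _ + 1, 0 => 1
  | m + 1, i + 1 => qb q m (i + 1) + q ^ (m - i) * qb q m i

lemma qb_succ_succ (q : k) (m i : ℕ) :
    qb q (m + 1) (i + 1) = qb q m (i + 1) + q ^ (m - i) * qb q m i := rfl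

@[simp] lemma qb_zero_right (q : k) (m : ℕ) : qb q m 0 = 1 := by
  cases m <;> rfl

lemma qb_eq_zero (q : k) : ∀ m i : ℕ, m < i → qb q m i = 0
  | 0, i + 1, _ => rfl
  | m + 1, i + 1, h => by
    rw [qb_succ_succ, qb_eq_zero q m (i + 1) (by omega), qb_eq_zero q m i (by omega)]
    ring

@[simp] lemma qb_diag (q : k) : ∀ m : ℕ, qb q m m = 1
  | 0 => rfl
  | m + 1 => by
    rw [qb_succ_succ, qb_eq_zero q m (m + 1) (by omega), qb_diag q m]
    simp [Nat.sub_self]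

lemma qb_succ_one (q : k) (m : ℕ) : qb q (m + 1) 1 = qb q m 1 + q ^ m := by
  have := qb_succ_succ q m 0
  simpa using this

lemma qb_one_right (q : k) (m : ℕ) : qb q (m + 1) 1 = q * qb q m 1 + 1 := by
  induction m with
  | zero =>
    rw [qb_succ_one]
    norm_num [show qb q 0 1 = 0 from rfl]
  | succ m ih =>
    rw [qb_succ_one q (m + 1)]
    nth_rewrite 1 [ih]
    rw [qb_succ_one q m]
    ring

/-- The second q-Pascal identity. -/
lemma qb_pascal (q : k) : ∀ m i : ℕ, qb q (m + 1) (i + 1) = q ^ (i + 1) * qb q m (i + 1) + qb q m i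
  | 0, 0 => by norm_num [qb_succ_one, show qb q 0 1 = 0 from rfl]
  | 0, i + 1 => by
    rw [qb_succ_succ]
    norm_num [qb_eq_zero q 0 (i + 1) (by omega), qb_eq_zero q 0 (i + 2) (by omega)]
  | m + 1, 0 => by
    have := qb_one_right q (m + 1)
    simpa [pow_one] using this
  | m + 1, i + 1 => by
    rcases le_or_gt (i + 1) m with h | h
    · have hA := qb_pascal q m (i + 1)
      have hB := qb_succ_succ q m (i + 1)
      have hC := qb_pascal q m i
      have hD := qb_succ_succ q m i
      rw [qb_succ_succ q (m + 1) (i + 1)]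
      obtain ⟨s, rfl⟩ : ∃ s, m = i + 1 + s := ⟨m - (i + 1), by omega⟩
      rw [show i + 1 + s - (i + 1) = s from by omega] at hB
      rw [show i + 1 + s - i = s + 1 from by omega] at hD
      rw [show i + 1 + s + 1 - (i + 1) = s + 1 from by omega]
      linear_combination hA + q ^ (s + 1) * hC - q ^ (i + 2) * hB - hD
    · rw [qb_succ_succ q (m + 1) (i + 1), qb_eq_zero q (m + 1) (i + 2) (by omega),
        show m + 1 - (i + 1) = 0 from by omega, pow_zero]
      ring
termination_by m i => m + i

/-- Closed-form coefficient appearing in the comultiplication formula. -/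
def cc (q P : k) (m i : ℕ) : k := qb q m i * ∏ j ∈ Finset.Ico i m, (1 - P * q ^ j)

lemma cc_rec0 (q P : k) (m : ℕ) : cc q P (m + 1) 0 = cc q P m 0 * (1 - P * q ^ m) := by
  unfold cc
  rw [Finset.prod_Ico_succ_top (Nat.zero_le _), qb_zero_right, qb_zero_right]
  ring

lemma cc_recS (q P : k) (m i : ℕ) (h : i < m) :
    cc q P (m + 1) (i + 1) =
      cc q P m (i + 1) * (1 - P * q ^ (m + 1 + i)) + cc q P m i * q ^ (m - i) := by
  unfold cc
  rw [Finset.prod_Ico_succ_top (by omega : i + 1 ≤ m),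
    Finset.prod_eq_prod_Ico_succ_bot h]
  have hdef := qb_succ_succ q m i
  have hpas := qb_pascal q m i
  obtain ⟨s, rfl⟩ : ∃ s, m = i + 1 + s := ⟨m - (i + 1), by omega⟩
  rw [show i + 1 + s - i = s + 1 from by omega] at hdef ⊢
  linear_combination (∏ j ∈ Finset.Ico (i + 1) (i + 1 + s), (1 - P * q ^ j)) * hdef -
    (∏ j ∈ Finset.Ico (i + 1) (i + 1 + s), (1 - P * q ^ j)) * P * q ^ (i + 1 + s) * hpas

lemma cc_diag (q P : k) (m : ℕ) : cc q P m m = 1 := by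
  simp [cc]

end scalars

section hopf

variable {k H : Type*} [Field k] [Ring H] [Bialgebra k H]
variable (gx gy x y : H) (p12 p21 p22 : k)

set_option maxHeartbeats 2000000 in
theorem iterSkewComm_comul
    (hgy : comul (R := k) gy = gy ⊗ₜ[k] gy)
    (habelian : gx * gy = gy * gx)
    (hx : comul (R := k) x = x ⊗ₜ[k] 1 + gx ⊗ₜ[k] x)
    (hy : comul (R := k) y = y ⊗ₜ[k] 1 + gy ⊗ₜ[k] y)
    (hxgy : x * gy = p12 • (gy * x))
    (hygx : y * gx = p21 • (gx * y))
    (hygy : y * gy = p22 • (gy * y)) :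
    ∀ m : ℕ, comul (R := k) (iterSkewComm p12 p22 x y m) =
      iterSkewComm p12 p22 x y m ⊗ₜ[k] 1 +
      (gx * gy ^ m) ⊗ₜ[k] iterSkewComm p12 p22 x y m +
      ∑ i ∈ Finset.range m, cc p22 (p12 * p21) m i •
        ((gx * gy ^ i * y ^ (m - i)) ⊗ₜ[k] iterSkewComm p12 p22 x y i) := by
  have hgyx : gy * gx = gx * gy := habelian.symm
  -- y commutes with powers of gy
  have hygyp : ∀ j : ℕ, y * gy ^ j = p22 ^ j • (gy ^ j * y) := by
    intro j
    induction j with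
    | zero => simp
    | succ j ih =>
      rw [pow_succ, ← mul_assoc, ih, smul_mul_assoc, mul_assoc, hygy, mul_smul_comm,
        smul_smul, ← mul_assoc, ← pow_succ, ← pow_succ]
  have hgypy : ∀ j : ℕ, y ^ j * gy = p22 ^ j • (gy * y ^ j) := by
    intro j
    induction j with
    | zero => simp
    | succ j ih =>
      rw [pow_succ, mul_assoc, hygy, mul_smul_comm, ← mul_assoc, ih, smul_mul_assoc,
        smul_smul, mul_assoc, ← pow_succ, ← pow_succ']
  -- W commutes with gy
  have hWgy : ∀ j : ℕ, iterSkewComm p12 p22 x y j * gy =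
      (p12 * p22 ^ j) • (gy * iterSkewComm p12 p22 x y j) := by
    intro j
    induction j with
    | zero =>
      show x * gy = (p12 * p22 ^ 0) • (gy * x)
      simpa using hxgy
    | succ j ih =>
      show (iterSkewComm p12 p22 x y j * y - (p12 * p22 ^ j) • (y * iterSkewComm p12 p22 x y j))
          * gy = (p12 * p22 ^ (j + 1)) •
          (gy * (iterSkewComm p12 p22 x y j * y -
            (p12 * p22 ^ j) • (y * iterSkewComm p12 p22 x y j)))
      rw [sub_mul, smul_mul_assoc, mul_assoc, mul_assoc, hygy, mul_smul_comm, ← mul_assoc,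
        ih, smul_mul_assoc, smul_smul, mul_smul_comm, ← mul_assoc y gy, hygy, smul_mul_assoc,
        mul_assoc, mul_assoc gy y, mul_sub gy, mul_smul_comm]
      module
  -- basic monomial commutation lemmas
  have hBy : ∀ a j : ℕ, gx * gy ^ a * y ^ j * y = gx * gy ^ a * y ^ (j + 1) := by
    intro a j; rw [mul_assoc, ← pow_succ]
  have hBgy : ∀ a j : ℕ, gx * gy ^ a * y ^ j * gy = p22 ^ j • (gx * gy ^ (a + 1) * y ^ j) := by
    intro a j
    rw [mul_assoc, hgypy, mul_smul_comm, ← mul_assoc, mul_assoc gx, ← pow_succ]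
  have hyB : ∀ a j : ℕ, y * (gx * gy ^ a * y ^ j) =
      (p21 * p22 ^ a) • (gx * gy ^ a * y ^ (j + 1)) := by
    intro a j
    rw [← mul_assoc, ← mul_assoc, hygx, smul_mul_assoc, smul_mul_assoc, mul_assoc gx,
      hygyp, mul_smul_comm, smul_mul_assoc, smul_smul, ← mul_assoc, mul_assoc _ y,
      ← pow_succ', mul_assoc gx]
  have hgyB : ∀ a j : ℕ, gy * (gx * gy ^ a * y ^ j) = gx * gy ^ (a + 1) * y ^ j := by
    intro a j
    rw [← mul_assoc, ← mul_assoc, hgyx, mul_assoc gx, ← pow_succ']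
  have hyG : ∀ a : ℕ, y * (gx * gy ^ a) = (p21 * p22 ^ a) • (gx * gy ^ a * y) := by
    intro a
    have := hyB a 0
    simpa using this
  have hGgy : ∀ a : ℕ, gx * gy ^ a * gy = gx * gy ^ (a + 1) := by
    intro a; rw [mul_assoc, ← pow_succ]
  have hgyG : ∀ a : ℕ, gy * (gx * gy ^ a) = gx * gy ^ (a + 1) := by
    intro a
    have := hgyB a 0
    simpa using this
  intro m
  induction m with
  | zero => simpa [iterSkewComm] using hx
  | succ m ih =>
    have e0 : iterSkewComm p12 p22 x y (m + 1) = iterSkewComm p12 p22 x y m * y - (p12 * p22 ^ m) • (y * iterSkewComm p12 p22 x y m) := rfl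
    have t1 : (iterSkewComm p12 p22 x y m ⊗ₜ[k] (1 : H)) * (y ⊗ₜ[k] (1 : H)) = (iterSkewComm p12 p22 x y m * y) ⊗ₜ[k] (1 : H) := by
      rw [Algebra.TensorProduct.tmul_mul_tmul, mul_one]
    have t2 : (iterSkewComm p12 p22 x y m ⊗ₜ[k] (1 : H)) * (gy ⊗ₜ[k] y) = (p12 * p22 ^ m) • ((gy * iterSkewComm p12 p22 x y m) ⊗ₜ[k] y) := by
      rw [Algebra.TensorProduct.tmul_mul_tmul, one_mul, hWgy m, ← TensorProduct.smul_tmul']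
    have t3 : ((gx * gy ^ m) ⊗ₜ[k] iterSkewComm p12 p22 x y m) * (y ⊗ₜ[k] (1 : H)) = (gx * gy ^ m * y) ⊗ₜ[k] iterSkewComm p12 p22 x y m := by
      rw [Algebra.TensorProduct.tmul_mul_tmul, mul_one]
    have t4 : ((gx * gy ^ m) ⊗ₜ[k] iterSkewComm p12 p22 x y m) * (gy ⊗ₜ[k] y) = (gx * gy ^ (m + 1)) ⊗ₜ[k] (iterSkewComm p12 p22 x y m * y) := by
      rw [Algebra.TensorProduct.tmul_mul_tmul, hGgy]
    have u1 : (y ⊗ₜ[k] (1 : H)) * (iterSkewComm p12 p22 x y m ⊗ₜ[k] (1 : H)) = (y * iterSkewComm p12 p22 x y m) ⊗ₜ[k] (1 : H) := by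
      rw [Algebra.TensorProduct.tmul_mul_tmul, mul_one]
    have u2 : (y ⊗ₜ[k] (1 : H)) * ((gx * gy ^ m) ⊗ₜ[k] iterSkewComm p12 p22 x y m) =
        (p21 * p22 ^ m) • ((gx * gy ^ m * y) ⊗ₜ[k] iterSkewComm p12 p22 x y m) := by
      rw [Algebra.TensorProduct.tmul_mul_tmul, one_mul, hyG m, ← TensorProduct.smul_tmul']
    have u3 : (gy ⊗ₜ[k] y) * (iterSkewComm p12 p22 x y m ⊗ₜ[k] (1 : H)) = (gy * iterSkewComm p12 p22 x y m) ⊗ₜ[k] y := by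
      rw [Algebra.TensorProduct.tmul_mul_tmul, mul_one]
    have u4 : (gy ⊗ₜ[k] y) * ((gx * gy ^ m) ⊗ₜ[k] iterSkewComm p12 p22 x y m) =
        (gx * gy ^ (m + 1)) ⊗ₜ[k] (y * iterSkewComm p12 p22 x y m) := by
      rw [Algebra.TensorProduct.tmul_mul_tmul, hgyG]
    have hS1 : (∑ i ∈ Finset.range m, cc p22 (p12 * p21) m i • ((gx * gy ^ i * y ^ (m - i)) ⊗ₜ[k] iterSkewComm p12 p22 x y i)) * (y ⊗ₜ[k] (1 : H)) = ∑ i ∈ Finset.range m, cc p22 (p12 * p21) m i • ((gx * gy ^ i * y ^ (m + 1 - i)) ⊗ₜ[k] iterSkewComm p12 p22 x y i) := by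
      rw [Finset.sum_mul]
      refine Finset.sum_congr rfl fun i hi => ?_
      have hi' := Finset.mem_range.mp hi
      rw [smul_mul_assoc, Algebra.TensorProduct.tmul_mul_tmul, mul_one, hBy i (m - i),
        show m - i + 1 = m + 1 - i from by omega]
    have hS2 : (∑ i ∈ Finset.range m, cc p22 (p12 * p21) m i • ((gx * gy ^ i * y ^ (m - i)) ⊗ₜ[k] iterSkewComm p12 p22 x y i)) * (gy ⊗ₜ[k] y) = ∑ i ∈ Finset.range m, (cc p22 (p12 * p21) m i * p22 ^ (m - i)) • ((gx * gy ^ (i + 1) * y ^ (m - i)) ⊗ₜ[k] (iterSkewComm p12 p22 x y i * y)) := by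
      rw [Finset.sum_mul]
      refine Finset.sum_congr rfl fun i hi => ?_
      rw [smul_mul_assoc, Algebra.TensorProduct.tmul_mul_tmul, hBgy i (m - i),
        ← TensorProduct.smul_tmul', smul_smul]
    have hS3 : (p12 * p22 ^ m) • ((y ⊗ₜ[k] (1 : H)) * (∑ i ∈ Finset.range m, cc p22 (p12 * p21) m i • ((gx * gy ^ i * y ^ (m - i)) ⊗ₜ[k] iterSkewComm p12 p22 x y i))) = ∑ i ∈ Finset.range m, (cc p22 (p12 * p21) m i * (p12 * p21 * p22 ^ (m + i))) • ((gx * gy ^ i * y ^ (m + 1 - i)) ⊗ₜ[k] iterSkewComm p12 p22 x y i) := by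
      rw [Finset.mul_sum, Finset.smul_sum]
      refine Finset.sum_congr rfl fun i hi => ?_
      have hi' := Finset.mem_range.mp hi
      rw [mul_smul_comm, Algebra.TensorProduct.tmul_mul_tmul, one_mul, hyB i (m - i),
        show m - i + 1 = m + 1 - i from by omega, ← TensorProduct.smul_tmul', smul_smul, smul_smul]
      module
    have hS4 : (p12 * p22 ^ m) • ((gy ⊗ₜ[k] y) * (∑ i ∈ Finset.range m, cc p22 (p12 * p21) m i • ((gx * gy ^ i * y ^ (m - i)) ⊗ₜ[k] iterSkewComm p12 p22 x y i))) = ∑ i ∈ Finset.range m, (cc p22 (p12 * p21) m i * (p12 * p22 ^ m)) • ((gx * gy ^ (i + 1) * y ^ (m - i)) ⊗ₜ[k] (y * iterSkewComm p12 p22 x y i)) := by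
      rw [Finset.mul_sum, Finset.smul_sum]
      refine Finset.sum_congr rfl fun i hi => ?_
      rw [mul_smul_comm, Algebra.TensorProduct.tmul_mul_tmul, hgyB i (m - i), smul_smul]
      module
    have e1 : ∀ i ∈ Finset.range m, cc p22 (p12 * p21) (m + 1) (i + 1) • ((gx * gy ^ (i + 1) * y ^ (m + 1 - (i + 1))) ⊗ₜ[k] iterSkewComm p12 p22 x y (i + 1)) = (cc p22 (p12 * p21) m (i + 1) * (1 - p12 * p21 * p22 ^ (m + (i + 1)))) • ((gx * gy ^ (i + 1) * y ^ (m + 1 - (i + 1))) ⊗ₜ[k] iterSkewComm p12 p22 x y (i + 1)) + ((cc p22 (p12 * p21) m i * p22 ^ (m - i)) • ((gx * gy ^ (i + 1) * y ^ (m - i)) ⊗ₜ[k] (iterSkewComm p12 p22 x y i * y)) - (cc p22 (p12 * p21) m i * (p12 * p22 ^ m)) • ((gx * gy ^ (i + 1) * y ^ (m - i)) ⊗ₜ[k] (y * iterSkewComm p12 p22 x y i))) := by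
      intro i hi
      have hi' := Finset.mem_range.mp hi
      have e1b : (cc p22 (p12 * p21) m i * p22 ^ (m - i)) • ((gx * gy ^ (i + 1) * y ^ (m + 1 - (i + 1))) ⊗ₜ[k] iterSkewComm p12 p22 x y (i + 1)) =
          (cc p22 (p12 * p21) m i * p22 ^ (m - i)) • ((gx * gy ^ (i + 1) * y ^ (m - i)) ⊗ₜ[k] (iterSkewComm p12 p22 x y i * y)) - (cc p22 (p12 * p21) m i * (p12 * p22 ^ m)) • ((gx * gy ^ (i + 1) * y ^ (m - i)) ⊗ₜ[k] (y * iterSkewComm p12 p22 x y i)) := by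
        rw [show m + 1 - (i + 1) = m - i from by omega,
          show iterSkewComm p12 p22 x y (i + 1) = iterSkewComm p12 p22 x y i * y - (p12 * p22 ^ i) • (y * iterSkewComm p12 p22 x y i) from rfl,
          TensorProduct.tmul_sub, smul_sub, TensorProduct.tmul_smul, smul_smul]
        obtain ⟨d, rfl⟩ : ∃ d, m = i + d := ⟨m - i, by omega⟩
        rw [show i + d - i = d from by omega]
        module
      rw [cc_recS p22 (p12 * p21) m i hi', add_smul,
        show m + 1 + i = m + (i + 1) from by omega, e1b]
    have e2 : ∀ j ∈ Finset.range m, (cc p22 (p12 * p21) m (j) * (1 - p12 * p21 * p22 ^ (m + (j)))) • ((gx * gy ^ (j) * y ^ (m + 1 - (j))) ⊗ₜ[k] iterSkewComm p12 p22 x y (j)) =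
        cc p22 (p12 * p21) m (j) • ((gx * gy ^ (j) * y ^ (m + 1 - (j))) ⊗ₜ[k] iterSkewComm p12 p22 x y (j)) -
        (cc p22 (p12 * p21) m (j) * (p12 * p21 * p22 ^ (m + (j)))) • ((gx * gy ^ (j) * y ^ (m + 1 - (j))) ⊗ₜ[k] iterSkewComm p12 p22 x y (j)) := by
      intro j hj
      rw [mul_sub, mul_one, sub_smul]
    have r3 : (∑ i ∈ Finset.range (m + 1), cc p22 (p12 * p21) (m + 1) i • ((gx * gy ^ i * y ^ (m + 1 - i)) ⊗ₜ[k] iterSkewComm p12 p22 x y i)) =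
        (∑ i ∈ Finset.range m, cc p22 (p12 * p21) m i • ((gx * gy ^ i * y ^ (m + 1 - i)) ⊗ₜ[k] iterSkewComm p12 p22 x y i)) - (∑ i ∈ Finset.range m, (cc p22 (p12 * p21) m i * (p12 * p21 * p22 ^ (m + i))) • ((gx * gy ^ i * y ^ (m + 1 - i)) ⊗ₜ[k] iterSkewComm p12 p22 x y i)) +
        ((gx * gy ^ m * y) ⊗ₜ[k] iterSkewComm p12 p22 x y m - (p12 * p22 ^ m * (p21 * p22 ^ m)) • ((gx * gy ^ m * y) ⊗ₜ[k] iterSkewComm p12 p22 x y m)) +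
        ((∑ i ∈ Finset.range m, (cc p22 (p12 * p21) m i * p22 ^ (m - i)) • ((gx * gy ^ (i + 1) * y ^ (m - i)) ⊗ₜ[k] (iterSkewComm p12 p22 x y i * y))) - (∑ i ∈ Finset.range m, (cc p22 (p12 * p21) m i * (p12 * p22 ^ m)) • ((gx * gy ^ (i + 1) * y ^ (m - i)) ⊗ₜ[k] (y * iterSkewComm p12 p22 x y i)))) := by
      calc (∑ i ∈ Finset.range (m + 1), cc p22 (p12 * p21) (m + 1) i • ((gx * gy ^ i * y ^ (m + 1 - i)) ⊗ₜ[k] iterSkewComm p12 p22 x y i))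
          = (∑ i ∈ Finset.range m, cc p22 (p12 * p21) (m + 1) (i + 1) • ((gx * gy ^ (i + 1) * y ^ (m + 1 - (i + 1))) ⊗ₜ[k] iterSkewComm p12 p22 x y (i + 1))) + cc p22 (p12 * p21) (m + 1) (0) • ((gx * gy ^ (0) * y ^ (m + 1 - (0))) ⊗ₜ[k] iterSkewComm p12 p22 x y (0)) := Finset.sum_range_succ' (fun j => cc p22 (p12 * p21) (m + 1) (j) • ((gx * gy ^ (j) * y ^ (m + 1 - (j))) ⊗ₜ[k] iterSkewComm p12 p22 x y (j))) m
        _ = (∑ i ∈ Finset.range m, ((cc p22 (p12 * p21) m (i + 1) * (1 - p12 * p21 * p22 ^ (m + (i + 1)))) • ((gx * gy ^ (i + 1) * y ^ (m + 1 - (i + 1))) ⊗ₜ[k] iterSkewComm p12 p22 x y (i + 1)) + ((cc p22 (p12 * p21) m i * p22 ^ (m - i)) • ((gx * gy ^ (i + 1) * y ^ (m - i)) ⊗ₜ[k] (iterSkewComm p12 p22 x y i * y)) - (cc p22 (p12 * p21) m i * (p12 * p22 ^ m)) • ((gx * gy ^ (i + 1) * y ^ (m - i)) ⊗ₜ[k]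 (y * iterSkewComm p12 p22 x y i))))) + cc p22 (p12 * p21) (m + 1) (0) • ((gx * gy ^ (0) * y ^ (m + 1 - (0))) ⊗ₜ[k] iterSkewComm p12 p22 x y (0)) :=
            congrArg (· + _) (Finset.sum_congr rfl e1)
        _ = ((∑ i ∈ Finset.range m, (cc p22 (p12 * p21) m (i + 1) * (1 - p12 * p21 * p22 ^ (m + (i + 1)))) • ((gx * gy ^ (i + 1) * y ^ (m + 1 - (i + 1))) ⊗ₜ[k] iterSkewComm p12 p22 x y (i + 1))) + (cc p22 (p12 * p21) m (0) * (1 - p12 * p21 * p22 ^ (m + (0)))) • ((gx * gy ^ (0) * y ^ (m + 1 - (0))) ⊗ₜ[k] iterSkewComm p12 p22 x y (0))) + ((∑ i ∈ Finset.range m, (cc p22 (p12 * p21) m i * p22 ^ (m - i)) • ((gx * gy ^ (i + 1) * y ^ (m - i)) ⊗ₜ[k] (iterSkewComm p12 p22 x y i * y))) - (∑ i ∈ Finset.range m, (cc p22 (p12 * p21) m i * (p12 * p22 ^ m)) • ((gx * gy ^ (i + 1) * y ^ (m - i)) ⊗ₜ[k] (y * iterSkewComm p12 p22 x y i)))) :=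 by
            rw [Finset.sum_add_distrib, Finset.sum_sub_distrib, cc_rec0]
            abel
        _ = (∑ j ∈ Finset.range (m + 1), (cc p22 (p12 * p21) m (j) * (1 - p12 * p21 * p22 ^ (m + (j)))) • ((gx * gy ^ (j) * y ^ (m + 1 - (j))) ⊗ₜ[k] iterSkewComm p12 p22 x y (j))) + ((∑ i ∈ Finset.range m, (cc p22 (p12 * p21) m i * p22 ^ (m - i)) • ((gx * gy ^ (i + 1) * y ^ (m - i)) ⊗ₜ[k] (iterSkewComm p12 p22 x y i * y))) - (∑ i ∈ Finset.range m, (cc p22 (p12 * p21) m i * (p12 * p22 ^ m)) • ((gx * gy ^ (i + 1) * y ^ (m - i)) ⊗ₜ[k] (y * iterSkewComm p12 p22 x y i)))) :=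
            congrArg (· + _) (Finset.sum_range_succ' (fun j => (cc p22 (p12 * p21) m (j) * (1 - p12 * p21 * p22 ^ (m + (j)))) • ((gx * gy ^ (j) * y ^ (m + 1 - (j))) ⊗ₜ[k] iterSkewComm p12 p22 x y (j))) m).symm
        _ = ((∑ j ∈ Finset.range m, (cc p22 (p12 * p21) m (j) * (1 - p12 * p21 * p22 ^ (m + (j)))) • ((gx * gy ^ (j) * y ^ (m + 1 - (j))) ⊗ₜ[k] iterSkewComm p12 p22 x y (j))) + (cc p22 (p12 * p21) m (m) * (1 - p12 * p21 * p22 ^ (m + (m)))) • ((gx * gy ^ (m) * y ^ (m + 1 - (m))) ⊗ₜ[k] iterSkewComm p12 p22 x y (m))) + ((∑ i ∈ Finset.range m, (cc p22 (p12 * p21) m i * p22 ^ (m - i)) • ((gx * gy ^ (i + 1) * y ^ (m - i)) ⊗ₜ[k] (iterSkewComm p12 p22 x y i * y))) - (∑ i ∈ Finset.range m, (cc p22 (p12 * p21) m i * (p12 * p22 ^ m)) • ((gx * gy ^ (i + 1) * y ^ (m - i)) ⊗ₜ[k] (y * iterSkewComm p12 p22 x y i)))) :=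
            congrArg (· + _) (Finset.sum_range_succ (fun j => (cc p22 (p12 * p21) m (j) * (1 - p12 * p21 * p22 ^ (m + (j)))) • ((gx * gy ^ (j) * y ^ (m + 1 - (j))) ⊗ₜ[k] iterSkewComm p12 p22 x y (j))) m)
        _ = (∑ i ∈ Finset.range m, cc p22 (p12 * p21) m i • ((gx * gy ^ i * y ^ (m + 1 - i)) ⊗ₜ[k] iterSkewComm p12 p22 x y i)) - (∑ i ∈ Finset.range m, (cc p22 (p12 * p21) m i * (p12 * p21 * p22 ^ (m + i))) • ((gx * gy ^ i * y ^ (m + 1 - i)) ⊗ₜ[k] iterSkewComm p12 p22 x y i)) +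
            ((gx * gy ^ m * y) ⊗ₜ[k] iterSkewComm p12 p22 x y m - (p12 * p22 ^ m * (p21 * p22 ^ m)) • ((gx * gy ^ m * y) ⊗ₜ[k] iterSkewComm p12 p22 x y m)) +
            ((∑ i ∈ Finset.range m, (cc p22 (p12 * p21) m i * p22 ^ (m - i)) • ((gx * gy ^ (i + 1) * y ^ (m - i)) ⊗ₜ[k] (iterSkewComm p12 p22 x y i * y))) - (∑ i ∈ Finset.range m, (cc p22 (p12 * p21) m i * (p12 * p22 ^ m)) • ((gx * gy ^ (i + 1) * y ^ (m - i)) ⊗ₜ[k] (y * iterSkewComm p12 p22 x y i)))) := by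
            rw [Finset.sum_congr rfl e2, Finset.sum_sub_distrib, cc_diag,
              show m + 1 - m = 1 from by omega, pow_one]
            module
    rw [e0, map_sub, map_smul, Bialgebra.comul_mul, Bialgebra.comul_mul, hy, ih]
    simp only [add_mul, mul_add, smul_add, TensorProduct.sub_tmul, TensorProduct.tmul_sub,
      TensorProduct.tmul_smul, ← TensorProduct.smul_tmul']
    rw [t1, t2, t3, t4, u1, u2, u3, u4, hS1, hS2, hS3, hS4, r3]
    module

end hopf

/-- If `x` is `g_x`-primitive, `y` is `g_y`-primitive, with commutation constants
`p₁₂ = χˣ(g_y)`, `p₂₁ = χʸ(g_x)`, `p₂₂ = χʸ(g_y)` satisfying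
`p₁₂ p₂₁ = p₂₂^{1-n}` (i.e. `p₁₂ p₂₁ p₂₂^{n-1} = 1`), then the iterated skew
commutator `W` of length `n` is `(g_x g_yⁿ)`-primitive. -/
theorem iterSkewComm_skewPrimitive {k H : Type*} [Field k] [Ring H] [Bialgebra k H]
    (gx gy x y : H) (p12 p21 p22 : k) (n : ℕ) (hn : 1 ≤ n)
    (hgx : comul (R := k) gx = gx ⊗ₜ[k] gx)
    (hgy : comul (R := k) gy = gy ⊗ₜ[k] gy)
    (habelian : gx * gy = gy * gx)
    (hx : comul (R := k) x = x ⊗ₜ[k] 1 + gx ⊗ₜ[k] x)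
    (hy : comul (R := k) y = y ⊗ₜ[k] 1 + gy ⊗ₜ[k] y)
    (hxgy : x * gy = p12 • (gy * x))
    (hygx : y * gx = p21 • (gx * y))
    (hygy : y * gy = p22 • (gy * y))
    (hp : p12 * p21 * p22 ^ (n - 1) = 1) :
    comul (R := k) (iterSkewComm p12 p22 x y n) =
      (iterSkewComm p12 p22 x y n) ⊗ₜ[k] 1 +
        (gx * gy ^ n) ⊗ₜ[k] (iterSkewComm p12 p22 x y n) := by
  rw [iterSkewComm_comul gx gy x y p12 p21 p22 hgy habelian hx hy hxgy hygx hygy n]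
  have hzero : ∀ i ∈ Finset.range n,
      cc p22 (p12 * p21) n i • ((gx * gy ^ i * y ^ (n - i)) ⊗ₜ[k] iterSkewComm p12 p22 x y i)
        = 0 := by
    intro i hi
    have hi' := Finset.mem_range.mp hi
    have hc : cc p22 (p12 * p21) n i = 0 := by
      unfold cc
      have hfac : (1 : k) - p12 * p21 * p22 ^ (n - 1) = 0 := by rw [hp]; ring
      exact mul_eq_zero_of_right _
        (Finset.prod_eq_zero (Finset.mem_Ico.mpr (by omega)) hfac)
    rw [hc, zero_smul]
  rw [Finset.sum_eq_zero hzero, add_zero]
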